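/- arXiv:1902.01311 — 3 statements merged into one kernel-verified Lean document; each statement's English description precedes it below -/
import Mathlib

section
/- Let k ≥ r ≥ 1 be integers and let M = (m_{ij}) be a k×r real matrix. Let V = ℂ², let z, w be the two coordinate functionals on ℂ², and let ω = z∧w be the alternating bilinear form ω(u,v) = z(u)w(v) − w(u)z(v) on V. Then, in the exterior algebra of the dual space of V^r = (ℂ²)^r, the r-th power of the 2-form i_M^*ω_k (the pullback of ω_k along i_M, viewed as an element of degree 2 of the exterior algebra of the dual of V^r) equals r!·det(MᵀM)·(z₁∧w₁∧z₂∧w₂∧⋯∧z_r∧w_r), where z_j, w_j denote the pullbacks of z, w under the j-th projection V^r → V, and MᵀM is the Gram matrix of the columns of M. -/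
open scoped BigOperators

set_option synthInstance.maxHeartbeats 1000000
set_option maxHeartbeats 4000000

noncomputable section

/-- The coordinate functional `z_j` on `(ℂ²)^r` (the `z`-coordinate of the `j`-th factor). -/
def zCoord (r : ℕ) (j : Fin r) : Module.Dual ℂ (Fin r → Fin 2 → ℂ) :=
  ((LinearMap.proj (0 : Fin 2) : (Fin 2 → ℂ) →ₗ[ℂ] ℂ)).comp
    (LinearMap.proj j : (Fin r → Fin 2 → ℂ) →ₗ[ℂ] (Fin 2 → ℂ))

/-- The coordinate functional `w_j` on `(ℂ²)^r` (the `w`-coordinate of the `j`-th factor). -/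
def wCoord (r : ℕ) (j : Fin r) : Module.Dual ℂ (Fin r → Fin 2 → ℂ) :=
  ((LinearMap.proj (1 : Fin 2) : (Fin 2 → ℂ) →ₗ[ℂ] ℂ)).comp
    (LinearMap.proj j : (Fin r → Fin 2 → ℂ) →ₗ[ℂ] (Fin 2 → ℂ))

/-- The linear map `i_M : (ℂ²)^r → (ℂ²)^k`,
`(v_1,…,v_r) ↦ (Σ_j m_{1j} v_j, …, Σ_j m_{kj} v_j)`, for a real `k × r` matrix `M`. -/
def iM (k r : ℕ) (M : Matrix (Fin k) (Fin r) ℝ) :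
    (Fin r → Fin 2 → ℂ) →ₗ[ℂ] (Fin k → Fin 2 → ℂ) :=
  LinearMap.pi fun i : Fin k =>
    ∑ j : Fin r, ((M i j : ℂ)) • (LinearMap.proj j : (Fin r → Fin 2 → ℂ) →ₗ[ℂ] (Fin 2 → ℂ))

/-! ### Auxiliary general lemmas -/

section ListPow

variable {A : Type*} [Semiring A]

lemma list_sum_pow_succ_length :
    ∀ l : List A, l.Pairwise Commute → (∀ x ∈ l, x * x = 0) →
      l.sum ^ (l.length + 1) = 0 := by
  intro l
  induction l with
  | nil => intro _ _; simp
  | cons x t ih =>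
    intro hp hsq
    have hpc := List.pairwise_cons.mp hp
    have hxt : Commute x t.sum := Commute.list_sum_right _ _ hpc.1
    have ihz : t.sum ^ (t.length + 1) = 0 :=
      ih hpc.2 fun y hy => hsq y (List.mem_cons_of_mem _ hy)
    rw [List.sum_cons, List.length_cons, hxt.add_pow]
    apply Finset.sum_eq_zero
    intro m hm
    match m with
    | 0 =>
      have : t.length + 1 + 1 - 0 = (t.length + 1) + 1 := rfl
      rw [this, pow_zero, one_mul, pow_succ, ihz, zero_mul, zero_mul]
    | 1 =>
      have : t.length + 1 + 1 - 1 = t.length + 1 := rfl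
      rw [this, ihz, pow_one, mul_zero, zero_mul]
    | (m + 2) =>
      have hx2 : x ^ (m + 2) = 0 := by
        have : x ^ (m + 2) = x ^ m * (x * x) := by
          rw [pow_add, pow_two]
        rw [this, hsq x List.mem_cons_self, mul_zero]
      rw [hx2, zero_mul, zero_mul]

lemma list_sum_pow_length :
    ∀ l : List A, l.Pairwise Commute → (∀ x ∈ l, x * x = 0) →
      l.sum ^ l.length = (l.length).factorial * l.prod := by
  intro l
  induction l with
  | nil => simp
  | cons x t ih =>
    intro hp hsq
    have hpc := List.pairwise_cons.mp hp
    have hxt : Commute x t.sum := Commute.list_sum_right _ _ hpc.1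
    have ihz : t.sum ^ (t.length + 1) = 0 :=
      list_sum_pow_succ_length t hpc.2 fun y hy => hsq y (List.mem_cons_of_mem _ hy)
    have iht : t.sum ^ t.length = (t.length).factorial * t.prod :=
      ih hpc.2 fun y hy => hsq y (List.mem_cons_of_mem _ hy)
    rw [List.sum_cons, List.length_cons, hxt.add_pow]
    rw [Finset.sum_eq_single_of_mem 1 (by simp)]
    · rw [pow_one, show t.length + 1 - 1 = t.length from rfl, iht, Nat.choose_one_right,
        List.prod_cons, Nat.factorial_succ, Nat.cast_mul,
        mul_assoc (((t.length + 1 : ℕ) : A)),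
        ← (Nat.cast_commute (t.length + 1) (x * (↑t.length.factorial * t.prod))).eq,
        ← mul_assoc x, ← (Nat.cast_commute t.length.factorial x).eq, mul_assoc]
    · intro m hm hne
      match m, hne with
      | 0, _ =>
        rw [pow_zero, one_mul, Nat.choose_zero_right, Nat.cast_one, mul_one]
        have : t.length + 1 - 0 = t.length + 1 := rfl
        rw [this, ihz]
      | (m + 2), _ =>
        have hx2 : x ^ (m + 2) = 0 := by
          have : x ^ (m + 2) = x ^ m * (x * x) := by rw [pow_add, pow_two]
          rw [this, hsq x List.mem_cons_self, mul_zero]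
        rw [hx2, zero_mul, zero_mul]

end ListPow

section ExtAux

variable {R : Type*} {M : Type*} [CommRing R] [AddCommGroup M] [Module R M]

open ExteriorAlgebra

lemma iota_anticomm (x y : M) :
    ι R x * ι R y = -(ι R y * ι R x) :=
  eq_neg_of_add_eq_zero_left (ι_add_mul_swap x y)

lemma iota_pair_comm1 (a b c : M) :
    Commute (ι R a * ι R b) (ι R c) := by
  show ι R a * ι R b * ι R c = ι R c * (ι R a * ι R b)
  rw [mul_assoc, iota_anticomm b c, mul_neg, ← mul_assoc, iota_anticomm a c, neg_mul, neg_neg,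
    mul_assoc]

lemma iota_pair_commute (a b c d : M) :
    Commute (ι R a * ι R b) (ι R c * ι R d) :=
  (iota_pair_comm1 a b c).mul_right (iota_pair_comm1 a b d)

lemma iota_pair_mul_same_snd (a c b : M) :
    (ι R a * ι R b) * (ι R c * ι R b) = 0 := by
  rw [mul_assoc, ← mul_assoc (ι R b), iota_anticomm b c, neg_mul, mul_neg,
    mul_assoc (ι R c), ι_sq_zero, mul_zero, mul_zero, neg_zero]

end ExtAux

section DetAux

open Finset

/-- An alternating map applied to linear combinations given by a square matrix
picks up a determinant factor. -/
lemma AlternatingMap.map_matrix_sum_smul {R M N : Type*} [CommRing R] [AddCommGroup M]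
    [Module R M] [AddCommGroup N] [Module R N] {n : ℕ}
    (f : M [⋀^Fin n]→ₗ[R] N) (A : Matrix (Fin n) (Fin n) R) (w : Fin n → M) :
    f (fun i => ∑ j, A i j • w j) = A.det • f w := by
  classical
  have h1 : f (fun i => ∑ j, A i j • w j)
      = ∑ g : Fin n → Fin n, f fun i => A i (g i) • w (g i) := by
    have := f.toMultilinearMap.map_sum (g := fun i j => A i j • w j)
    simpa using this
  have h2 : ∀ g : Fin n → Fin n,
      (f fun i => A i (g i) • w (g i)) = (∏ i, A i (g i)) • f (w ∘ g) := by
    intro g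
    have := f.toMultilinearMap.map_smul_univ (fun i => A i (g i)) (fun i => w (g i))
    simpa [Function.comp_def] using this
  rw [h1]
  simp_rw [h2]
  rw [← Finset.sum_subset (Finset.filter_subset Function.Bijective Finset.univ)
      (fun g _ hg => ?_)]
  · have h4 : ∑ g ∈ univ.filter Function.Bijective, (∏ i, A i (g i)) • f (w ∘ g)
        = ∑ σ : Equiv.Perm (Fin n), (∏ i, A i (σ i)) • f (w ∘ σ) :=
      Finset.sum_bij (fun (p : Fin n → Fin n) (h : p ∈ univ.filter Function.Bijective) =>
        Equiv.ofBijective p (Finset.mem_filter.1 h).2) (fun _ _ => Finset.mem_univ _)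
        (fun _ _ _ _ h => by injection h)
        (fun b _ => ⟨b, Finset.mem_filter.2 ⟨Finset.mem_univ _, b.bijective⟩,
          Equiv.coe_fn_injective rfl⟩) (fun _ _ => rfl)
    rw [h4]
    have h3 : ∀ σ : Equiv.Perm (Fin n),
        (∏ i, A i (σ i)) • f (w ∘ σ)
          = ((Equiv.Perm.sign σ : ℤ) : R) • (∏ i, A i (σ i)) • f w := by
      intro σ
      rw [f.map_perm w σ, smul_comm]
      rw [Int.cast_smul_eq_zsmul]
      simp [Units.smul_def]
    simp_rw [h3, smul_smul, ← Finset.sum_smul]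
    congr 1
    rw [← Matrix.det_transpose A, Matrix.det_apply']
    rfl
  · have hginj : ¬ Function.Injective g := by
      intro h
      exact hg (Finset.mem_filter.2 ⟨Finset.mem_univ _, Finite.injective_iff_bijective.mp h⟩)
    obtain ⟨i, j, hij, hne⟩ := Function.not_injective_iff.mp hginj
    rw [f.map_eq_zero_of_eq (w ∘ g) (show (w ∘ g) i = (w ∘ g) j by simp [Function.comp, hij]) hne,
      smul_zero]

end DetAux

/-! ### The alternating map `v ↦ (ι z_1 ι v_1) ⋯ (ι z_r ι v_r)` -/

open ExteriorAlgebra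

abbrev DD (r : ℕ) := Module.Dual ℂ (Fin r → Fin 2 → ℂ)
abbrev EE (r : ℕ) := ExteriorAlgebra ℂ (DD r)

/-- The multilinear map `(v_1,…,v_r) ↦ (ι z_1 * ι v_1) * ⋯ * (ι z_r * ι v_r)`. -/
def phiAux (r : ℕ) : MultilinearMap ℂ (fun _ : Fin r => DD r) (EE r) :=
  (MultilinearMap.mkPiAlgebraFin ℂ r (EE r)).compLinearMap
    (fun j => (LinearMap.mulLeft ℂ (ι ℂ (zCoord r j))).comp (ι ℂ))

lemma phiAux_apply (r : ℕ) (v : Fin r → DD r) :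
    phiAux r v = ((List.finRange r).map fun j => ι ℂ (zCoord r j) * ι ℂ (v j)).prod := by
  simp [phiAux, MultilinearMap.compLinearMap_apply, MultilinearMap.mkPiAlgebraFin_apply,
    List.ofFn_eq_map]

/-- The alternating map `(v_1,…,v_r) ↦ (ι z_1 * ι v_1) * ⋯ * (ι z_r * ι v_r)`. -/
def phi (r : ℕ) : (DD r) [⋀^Fin r]→ₗ[ℂ] (EE r) :=
  { phiAux r with
    map_eq_zero_of_eq' := by
      intro v i j hv hij
      show phiAux r v = 0
      rw [phiAux_apply]
      have hperm : List.Perm (List.finRange r)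
          (i :: j :: (((List.finRange r).erase i).erase j)) := by
        refine (List.perm_cons_erase (List.mem_finRange i)).trans (List.Perm.cons i ?_)
        exact List.perm_cons_erase ((List.mem_erase_of_ne hij.symm).mpr (List.mem_finRange j))
      have hpair : (((List.finRange r)).map
          (fun l => ι ℂ (zCoord r l) * ι ℂ (v l))).Pairwise Commute :=
        List.pairwise_map.mpr <| List.Pairwise.imp
          (fun {a b} _ => iota_pair_commute _ _ _ _) (List.nodup_finRange r)
      rw [List.Perm.prod_eq' (hperm.map _) hpair]
      simp only [List.map_cons, List.prod_cons]
      rw [show v i = v j from hv, ← mul_assoc, iota_pair_mul_same_snd, zero_mul] }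

lemma phi_apply (r : ℕ) (v : Fin r → DD r) :
    phi r v = ((List.finRange r).map fun j => ι ℂ (zCoord r j) * ι ℂ (v j)).prod :=
  phiAux_apply r v

/-! ### Main theorem -/

/-- For `k ≥ r ≥ 1` and a real `k × r` matrix `M`, in the exterior algebra of
the dual of `V^r` with `V = ℂ²` and `ω = z ∧ w`, the `r`-th power of the degree-2 element
`i_M^*ω_k = Σ_{i=1}^k (z_i ∘ i_M) ∧ (w_i ∘ i_M)` equals
`r! · det(MᵀM) · z_1 ∧ w_1 ∧ ⋯ ∧ z_r ∧ w_r`. -/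
theorem pullback_form_pow_eq_factorial_gram_det
    (k r : ℕ) (hr : 1 ≤ r) (hkr : r ≤ k) (M : Matrix (Fin k) (Fin r) ℝ) :
    (∑ i : Fin k,
        ExteriorAlgebra.ι ℂ ((zCoord k i).comp (iM k r M)) *
          ExteriorAlgebra.ι ℂ ((wCoord k i).comp (iM k r M))) ^ r
      = ((((r.factorial : ℝ) * (Matrix.transpose M * M).det : ℝ) : ℂ)) •
        ((List.finRange r).map fun j =>
          ExteriorAlgebra.ι ℂ (zCoord r j) * ExteriorAlgebra.ι ℂ (wCoord r j)).prod := by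
  classical
  have hz : ∀ i : Fin k,
      (zCoord k i).comp (iM k r M) = ∑ j : Fin r, (M i j : ℂ) • zCoord r j := by
    intro i
    ext v
    simp [zCoord, iM, LinearMap.pi_apply]
  have hw : ∀ i : Fin k,
      (wCoord k i).comp (iM k r M) = ∑ j : Fin r, (M i j : ℂ) • wCoord r j := by
    intro i
    ext v
    simp [wCoord, iM, LinearMap.pi_apply]
  set G : Matrix (Fin r) (Fin r) ℂ := fun j l => ((Matrix.transpose M * M) j l : ℂ) with hG
  set y : Fin r → DD r := fun j => ∑ l : Fin r, G j l • wCoord r l with hy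
  have hsum : (∑ i : Fin k,
        ExteriorAlgebra.ι ℂ ((zCoord k i).comp (iM k r M)) *
          ExteriorAlgebra.ι ℂ ((wCoord k i).comp (iM k r M)))
      = ∑ j : Fin r, ι ℂ (zCoord r j) * ι ℂ (y j) := by
    calc (∑ i : Fin k,
        ExteriorAlgebra.ι ℂ ((zCoord k i).comp (iM k r M)) *
          ExteriorAlgebra.ι ℂ ((wCoord k i).comp (iM k r M)))
        = ∑ i : Fin k, (∑ j : Fin r, (M i j : ℂ) • ι ℂ (zCoord r j)) *
            (∑ l : Fin r, (M i l : ℂ) • ι ℂ (wCoord r l)) := by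
          simp_rw [hz, hw, map_sum, map_smul]
      _ = ∑ i : Fin k, ∑ j : Fin r, ∑ l : Fin r,
            ((M i j : ℂ) * (M i l : ℂ)) • (ι ℂ (zCoord r j) * ι ℂ (wCoord r l)) := by
          simp_rw [Finset.sum_mul_sum, smul_mul_smul_comm]
      _ = ∑ j : Fin r, ∑ l : Fin r,
            (∑ i : Fin k, (M i j : ℂ) * (M i l : ℂ)) • (ι ℂ (zCoord r j) * ι ℂ (wCoord r l)) := by
          rw [Finset.sum_comm]
          refine Finset.sum_congr rfl fun j _ => ?_
          rw [Finset.sum_comm]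
          refine Finset.sum_congr rfl fun l _ => ?_
          rw [Finset.sum_smul]
      _ = ∑ j : Fin r, ∑ l : Fin r,
            G j l • (ι ℂ (zCoord r j) * ι ℂ (wCoord r l)) := by
          refine Finset.sum_congr rfl fun j _ => Finset.sum_congr rfl fun l _ => ?_
          congr 1
          rw [hG]
          simp [Matrix.mul_apply, Matrix.transpose_apply]
      _ = ∑ j : Fin r, ι ℂ (zCoord r j) * ι ℂ (y j) := by
          refine Finset.sum_congr rfl fun j _ => ?_
          rw [hy]
          simp only [map_sum, map_smul, Finset.mul_sum, mul_smul_comm]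
  rw [hsum]
  -- now use the commuting square-zero multinomial identity
  set c : Fin r → EE r := fun j => ι ℂ (zCoord r j) * ι ℂ (y j) with hc
  have hLsum : (∑ j : Fin r, c j) = ((List.finRange r).map c).sum := by
    rw [Fin.sum_univ_def]
  have hpair : ((List.finRange r).map c).Pairwise Commute :=
    List.pairwise_map.mpr <| List.Pairwise.imp
      (fun {a b} _ => iota_pair_commute _ _ _ _) (List.nodup_finRange r)
  have hsq : ∀ x ∈ (List.finRange r).map c, x * x = 0 := by
    intro x hx
    obtain ⟨j, _, rfl⟩ := List.mem_map.mp hx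
    exact iota_pair_mul_same_snd _ _ _
  have hpow := list_sum_pow_length ((List.finRange r).map c) hpair hsq
  have hlen : ((List.finRange r).map c).length = r := by simp
  rw [hlen] at hpow
  rw [hLsum, hpow]
  -- identify the list product with the alternating map and apply the determinant lemma
  have hprod : ((List.finRange r).map c).prod = phi r y := by
    rw [phi_apply]
  have hdet : phi r y = G.det • phi r (wCoord r) := by
    rw [hy]
    exact (phi r).map_matrix_sum_smul G (wCoord r)
  have hGdet : G.det = (((Matrix.transpose M * M).det : ℝ) : ℂ) := by
    have : G = (Matrix.transpose M * M).map Complex.ofRealHom := by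
      ext j l
      simp [hG, Matrix.map_apply]
    rw [this, ← RingHom.mapMatrix_apply, ← RingHom.map_det]
    rfl
  rw [hprod, hdet, hGdet, phi_apply, ← nsmul_eq_mul, ← Nat.cast_smul_eq_nsmul ℂ, smul_smul]
  congr 1
  push_cast
  ring

end
end

section
/- Let U be a complex vector space of dimension 2n equipped with a nondegenerate alternating bilinear form ω, and let l ≥ 1 be an integer. If W ⊆ U is a linear subspace such that ω^{∧l} vanishes identically on W (i.e. ω^{∧l}(w_1,…,w_{2l}) = 0 for all w_1,…,w_{2l} ∈ W), then dim W ≤ n + l − 1. -/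
open scoped BigOperators

/-- The `l`-fold wedge power of a bilinear form `β`, as an explicit `2l`-linear
expression: `β^{∧l}(u_1,…,u_{2l}) = Σ_{σ ∈ S_{2l}} sgn(σ) ∏_{i=1}^{l} β(u_{σ(2i−1)}, u_{σ(2i)})`. -/
noncomputable def wedgePow {T : Type*} (β : T → T → ℂ) (l : ℕ) (u : Fin (2 * l) → T) : ℂ :=
  ∑ σ : Equiv.Perm (Fin (2 * l)), ((Equiv.Perm.sign σ : ℤ) : ℂ) *
    ∏ i : Fin l, β (u (σ ⟨2 * i.1, by have := i.2; omega⟩))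
      (u (σ ⟨2 * i.1 + 1, by have := i.2; omega⟩))

namespace WedgeAux

variable {l : ℕ}

def posA (l : ℕ) (i : Fin l) : Fin (2 * l) := ⟨2 * i.1, by have := i.2; omega⟩
def posB (l : ℕ) (i : Fin l) : Fin (2 * l) := ⟨2 * i.1 + 1, by have := i.2; omega⟩

def flipn (m : ℕ) : ℕ := if m % 2 = 0 then m + 1 else m - 1

lemma flipn_flipn {m : ℕ} : flipn (flipn m) = m := by
  simp only [flipn]; split_ifs <;> omega

/-- The pairing equivalence `Fin (2l) ≃ Fin l × Fin 2`. -/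
def pairEquiv (l : ℕ) : Fin (2 * l) ≃ Fin l × Fin 2 where
  toFun x := (⟨x.1 / 2, by have := x.2; omega⟩, ⟨x.1 % 2, by omega⟩)
  invFun p := ⟨2 * p.1.1 + p.2.1, by have := p.1.2; have := p.2.2; omega⟩
  left_inv x := by apply Fin.ext; simp only; omega
  right_inv p := by
    obtain ⟨⟨a, ha⟩, ⟨b, hb⟩⟩ := p
    simp only [Prod.mk.injEq, Fin.mk.injEq]
    omega

/-- The block permutation of `Fin (2l)` induced by `τ : Perm (Fin l)`. -/
noncomputable def emb (τ : Equiv.Perm (Fin l)) : Equiv.Perm (Fin (2 * l)) :=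
  Equiv.ofBijective
    (fun x => ⟨2 * (τ ⟨x.1 / 2, by have := x.2; omega⟩).1 + x.1 % 2,
        by have := (τ ⟨x.1 / 2, by have := x.2; omega⟩).2; omega⟩)
    (by
      rw [← Finite.injective_iff_bijective]
      intro x y h
      have h1 : 2 * (τ ⟨x.1 / 2, by have := x.2; omega⟩).1 + x.1 % 2
          = 2 * (τ ⟨y.1 / 2, by have := y.2; omega⟩).1 + y.1 % 2 := congrArg Fin.val h
      have h2 : (τ ⟨x.1 / 2, by have := x.2; omega⟩).1
          = (τ ⟨y.1 / 2, by have := y.2; omega⟩).1 := by omega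
      have h3 : (⟨x.1 / 2, by have := x.2; omega⟩ : Fin l)
          = ⟨y.1 / 2, by have := y.2; omega⟩ := τ.injective (Fin.ext h2)
      have h4 : x.1 / 2 = y.1 / 2 := congrArg Fin.val h3
      have h5 : x.1 % 2 = y.1 % 2 := by omega
      exact Fin.ext (by omega))

lemma emb_apply (τ : Equiv.Perm (Fin l)) (x : Fin (2 * l)) :
    ((emb τ) x).1 = 2 * (τ ⟨x.1 / 2, by have := x.2; omega⟩).1 + x.1 % 2 := rfl

lemma sign_emb (τ : Equiv.Perm (Fin l)) : Equiv.Perm.sign (emb τ) = 1 := by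
  have h := Equiv.Perm.sign_eq_sign_of_equiv (emb τ)
    (Equiv.prodCongrLeft (fun _ : Fin 2 => τ)) (pairEquiv l) ?_
  · rw [h, Equiv.Perm.sign_prodCongrLeft]
    simp [pow_succ]
  · intro x
    apply Prod.ext
    · apply Fin.ext
      show ((emb τ x).1 / 2 : ℕ) = (τ ⟨x.1 / 2, by have := x.2; omega⟩).1
      rw [emb_apply]; omega
    · apply Fin.ext
      show ((emb τ x).1 % 2 : ℕ) = x.1 % 2
      rw [emb_apply]; omega

end WedgeAux

namespace WedgeAux2
open WedgeAux Equiv Finset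

variable {l : ℕ}

lemma flipn_mod_even {m : ℕ} (h : m % 2 = 0) : flipn m = m + 1 := by simp [flipn, h]

lemma flipn_mod_odd {m : ℕ} (h : ¬ m % 2 = 0) : flipn m = m - 1 := by simp [flipn, h]

lemma sign_aux : ∀ (c : ℕ) (σ : Equiv.Perm (Fin (2 * l)))
    (_ : ∀ i : Fin l, (σ (posB l i)).1 = flipn (σ (posA l i)).1)
    (_ : (Finset.univ.filter (fun i : Fin l => ¬ (σ (posA l i)).1 % 2 = 0)).card = c),
    Equiv.Perm.sign σ = (-1) ^ c := by
  intro c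
  induction c with
  | zero =>
    intro σ hP hc
    have hall : ∀ i : Fin l, (σ (posA l i)).1 % 2 = 0 := by
      intro i
      by_contra h
      have : i ∈ Finset.univ.filter (fun i : Fin l => ¬ (σ (posA l i)).1 % 2 = 0) :=
        Finset.mem_filter.mpr ⟨Finset.mem_univ _, h⟩
      rw [Finset.card_eq_zero] at hc
      rw [hc] at this
      exact absurd this (Finset.notMem_empty i)
    -- build τ
    have hτinj : Function.Injective
        (fun i : Fin l => (⟨(σ (posA l i)).1 / 2, by have := (σ (posA l i)).2; omega⟩ : Fin l)) := by
      intro i j hij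
      have h1 : (σ (posA l i)).1 / 2 = (σ (posA l j)).1 / 2 := congrArg Fin.val hij
      have h2 : (σ (posA l i)).1 = (σ (posA l j)).1 := by
        have := hall i; have := hall j; omega
      have h3 : posA l i = posA l j := σ.injective (Fin.ext h2)
      have h4 : 2 * i.1 = 2 * j.1 := congrArg Fin.val h3
      exact Fin.ext (by omega)
    set τ : Equiv.Perm (Fin l) := Equiv.ofBijective _ (Finite.injective_iff_bijective.mp hτinj)
      with hτ
    have hσ : σ = emb τ := by
      apply Equiv.ext
      intro x
      apply Fin.ext
      rw [emb_apply]
      show (σ x).1 = 2 * ((σ (posA l ⟨x.1 / 2, by have := x.2; omega⟩)).1 / 2) + x.1 % 2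
      by_cases hx : x.1 % 2 = 0
      · have hxA : posA l ⟨x.1 / 2, by have := x.2; omega⟩ = x := Fin.ext (by simp [posA]; omega)
        have h2 := hall ⟨x.1 / 2, by have := x.2; omega⟩
        have h3 : (σ (posA l ⟨x.1 / 2, by have := x.2; omega⟩)).1 = (σ x).1 :=
          congrArg (fun z => (σ z).1) hxA
        omega
      · have hxB : posB l ⟨x.1 / 2, by have := x.2; omega⟩ = x := Fin.ext (by simp [posB]; omega)
        have h2 := hall ⟨x.1 / 2, by have := x.2; omega⟩
        have h1 := (hP ⟨x.1 / 2, by have := x.2; omega⟩).trans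
          (flipn_mod_even (hall ⟨x.1 / 2, by have := x.2; omega⟩))
        have h3 : (σ (posB l ⟨x.1 / 2, by have := x.2; omega⟩)).1 = (σ x).1 :=
          congrArg (fun z => (σ z).1) hxB
        omega
    rw [hσ, sign_emb, pow_zero]
  | succ c ih =>
    intro σ hP hc
    have hne : (Finset.univ.filter (fun i : Fin l => ¬ (σ (posA l i)).1 % 2 = 0)).Nonempty :=
      Finset.card_pos.mp (by omega)
    obtain ⟨i, hi⟩ := hne
    have hio : ¬ (σ (posA l i)).1 % 2 = 0 := (Finset.mem_filter.mp hi).2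
    have hAB : posA l i ≠ posB l i := Fin.ne_of_val_ne (by simp [posA, posB])
    set s : Equiv.Perm (Fin (2 * l)) := Equiv.swap (posA l i) (posB l i) with hs
    set σ' : Equiv.Perm (Fin (2 * l)) := σ * s with hσ'
    have hA : σ' (posA l i) = σ (posB l i) := by
      rw [hσ', Equiv.Perm.mul_apply, hs, Equiv.swap_apply_left]
    have hB : σ' (posB l i) = σ (posA l i) := by
      rw [hσ', Equiv.Perm.mul_apply, hs, Equiv.swap_apply_right]
    have hAj : ∀ j : Fin l, j ≠ i → σ' (posA l j) = σ (posA l j) := by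
      intro j hj
      rw [hσ', Equiv.Perm.mul_apply, hs, Equiv.swap_apply_of_ne_of_ne]
      · exact Fin.ne_of_val_ne (by
          simp only [posA]
          have : j.1 ≠ i.1 := fun h => hj (Fin.ext h)
          omega)
      · exact Fin.ne_of_val_ne (by simp only [posA, posB]; omega)
    have hBj : ∀ j : Fin l, j ≠ i → σ' (posB l j) = σ (posB l j) := by
      intro j hj
      rw [hσ', Equiv.Perm.mul_apply, hs, Equiv.swap_apply_of_ne_of_ne]
      · exact Fin.ne_of_val_ne (by simp only [posA, posB]; omega)
      · exact Fin.ne_of_val_ne (by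
          simp only [posB]
          have : j.1 ≠ i.1 := fun h => hj (Fin.ext h)
          omega)
    have hP' : ∀ j : Fin l, (σ' (posB l j)).1 = flipn (σ' (posA l j)).1 := by
      intro j
      by_cases hj : j = i
      · subst hj
        rw [hA, hB, hP j, flipn_flipn]
      · rw [hAj j hj, hBj j hj]
        exact hP j
    have hfilter : (Finset.univ.filter (fun j : Fin l => ¬ (σ' (posA l j)).1 % 2 = 0))
        = (Finset.univ.filter (fun j : Fin l => ¬ (σ (posA l j)).1 % 2 = 0)).erase i := by
      ext j
      simp only [Finset.mem_filter, Finset.mem_erase, Finset.mem_univ, true_and]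
      by_cases hj : j = i
      · subst hj
        rw [hA]
        have h1 := hP j
        rw [flipn_mod_odd hio] at h1
        constructor
        · intro h; exact absurd (by omega) h
        · intro h; exact absurd rfl h.1
      · rw [hAj j hj]
        constructor
        · intro h; exact ⟨hj, h⟩
        · intro h; exact h.2
    have hcard : (Finset.univ.filter (fun j : Fin l => ¬ (σ' (posA l j)).1 % 2 = 0)).card = c := by
      rw [hfilter, Finset.card_erase_of_mem hi, hc]
      omega
    have hsign' := ih σ' hP' hcard
    have hσeq : σ = σ' * s := by
      rw [hσ', mul_assoc, hs, Equiv.swap_mul_self, mul_one]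
    rw [hσeq, Equiv.Perm.sign_mul, hsign', hs, Equiv.Perm.sign_swap hAB]
    rw [pow_succ]

end WedgeAux2

namespace Key
open WedgeAux WedgeAux2 Equiv Finset

lemma key_ne_zero {T : Type*} (l : ℕ) (β : T → T → ℂ) (w : Fin (2 * l) → T)
    (hJ : ∀ a b : Fin (2 * l), β (w a) (w b) =
      if a.1 % 2 = 0 ∧ b.1 = a.1 + 1 then 1
      else if b.1 % 2 = 0 ∧ a.1 = b.1 + 1 then -1 else 0) :
    wedgePow β l w ≠ 0 := by
  have hw : wedgePow β l w = ∑ σ : Equiv.Perm (Fin (2 * l)),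
      ((Equiv.Perm.sign σ : ℤ) : ℂ) *
        ∏ i : Fin l, β (w (σ (posA l i))) (w (σ (posB l i))) := rfl
  have hterm : ∀ σ : Equiv.Perm (Fin (2 * l)),
      ((Equiv.Perm.sign σ : ℤ) : ℂ) * ∏ i : Fin l, β (w (σ (posA l i))) (w (σ (posB l i)))
        = if (∀ i : Fin l, (σ (posB l i)).1 = flipn (σ (posA l i)).1) then 1 else 0 := by
    intro σ
    by_cases hP : ∀ i : Fin l, (σ (posB l i)).1 = flipn (σ (posA l i)).1
    · rw [if_pos hP]
      have hprod : ∏ i : Fin l, β (w (σ (posA l i))) (w (σ (posB l i)))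
          = ∏ i : Fin l, (if (σ (posA l i)).1 % 2 = 0 then (1 : ℂ) else -1) := by
        apply Finset.prod_congr rfl
        intro i _
        rw [hJ]
        by_cases h : (σ (posA l i)).1 % 2 = 0
        · rw [if_pos h, if_pos]
          have := (hP i).trans (flipn_mod_even h)
          exact ⟨h, this⟩
        · rw [if_neg h, if_neg, if_pos]
          · have h1 := (hP i).trans (flipn_mod_odd h)
            have h2 := (σ (posA l i)).2
            constructor <;> omega
          · rintro ⟨h1, _⟩
            exact h h1
      rw [hprod, Finset.prod_ite, Finset.prod_const_one, Finset.prod_const, one_mul]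
      rw [sign_aux (Finset.univ.filter (fun i : Fin l => ¬ (σ (posA l i)).1 % 2 = 0)).card σ hP rfl]
      push_cast
      rw [← mul_pow, neg_mul_neg, one_mul, one_pow]
    · rw [if_neg hP]
      push_neg at hP
      obtain ⟨i, hi⟩ := hP
      have hzero : β (w (σ (posA l i))) (w (σ (posB l i))) = 0 := by
        rw [hJ, if_neg, if_neg]
        · rintro ⟨h1, h2⟩
          apply hi
          rw [flipn_mod_odd (by omega : ¬ (σ (posA l i)).1 % 2 = 0)]
          omega
        · rintro ⟨h1, h2⟩
          apply hi
          rw [flipn_mod_even h1]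
          exact h2
      rw [Finset.prod_eq_zero (Finset.mem_univ i) hzero, mul_zero]
  rw [hw]
  rw [Finset.sum_congr rfl (fun σ _ => hterm σ)]
  rw [Finset.sum_boole]
  rw [Nat.cast_ne_zero]
  apply Finset.card_ne_zero_of_mem (a := 1)
  rw [Finset.mem_filter]
  refine ⟨Finset.mem_univ _, fun i => ?_⟩
  show (posB l i).1 = flipn (posA l i).1
  rw [flipn_mod_even (by simp [posA] : (posA l i).1 % 2 = 0)]
  rfl

end Key

open Module

section LinAlg

variable {U : Type*} [AddCommGroup U] [Module ℂ U] [FiniteDimensional ℂ U]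

lemma finrank_le_inf_ker (V' : Submodule ℂ U) (g : U →ₗ[ℂ] ℂ) :
    finrank ℂ V' ≤ finrank ℂ (V' ⊓ LinearMap.ker g : Submodule ℂ U) + 1 := by
  have h1 := LinearMap.finrank_range_add_finrank_ker (g.comp V'.subtype)
  have e1 : LinearMap.ker (g.comp V'.subtype)
      = Submodule.comap V'.subtype (V' ⊓ LinearMap.ker g) := by
    rw [Submodule.comap_inf, Submodule.comap_subtype_self, top_inf_eq, LinearMap.ker_comp]
  have e2 : finrank ℂ (LinearMap.ker (g.comp V'.subtype))
      = finrank ℂ (V' ⊓ LinearMap.ker g : Submodule ℂ U) := by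
    rw [e1]
    exact (Submodule.comapSubtypeEquivOfLe inf_le_left).finrank_eq
  have h3 : finrank ℂ (LinearMap.range (g.comp V'.subtype)) ≤ 1 := by
    have := Submodule.finrank_le (LinearMap.range (g.comp V'.subtype))
    simpa using this
  omega

lemma finrank_le_inf_iInf {m : ℕ} (V' : Submodule ℂ U) (g : Fin m → (U →ₗ[ℂ] ℂ)) :
    finrank ℂ V' ≤ finrank ℂ (V' ⊓ ⨅ i, LinearMap.ker (g i) : Submodule ℂ U) + m := by
  induction m generalizing V' with
  | zero =>
    have : (⨅ i : Fin 0, LinearMap.ker (g i)) = ⊤ := by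
      apply le_antisymm le_top
      exact le_iInf fun i => i.elim0
    rw [this, inf_top_eq]
    simp
  | succ m ih =>
    have hsplit : (⨅ i, LinearMap.ker (g i))
        = LinearMap.ker (g 0) ⊓ ⨅ i : Fin m, LinearMap.ker (g i.succ) := by
      apply le_antisymm
      · exact le_inf (iInf_le _ 0) (le_iInf fun i => iInf_le _ i.succ)
      · refine le_iInf fun i => ?_
        exact Fin.cases inf_le_left (fun j => le_trans inf_le_right (iInf_le _ j)) i
    rw [hsplit, inf_comm (LinearMap.ker (g 0)) _, ← inf_assoc]
    have h1 := ih V' (fun i => g i.succ)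
    have h2 := finrank_le_inf_ker (V' ⊓ ⨅ i : Fin m, LinearMap.ker (g i.succ)) (g 0)
    omega

lemma isotropic_le {n : ℕ} (hU : finrank ℂ U = 2 * n)
    (ω : U →ₗ[ℂ] U →ₗ[ℂ] ℂ) (halt : ω.IsAlt)
    (hnd : ∀ u : U, (∀ v : U, ω u v = 0) → u = 0)
    (S : Submodule ℂ U) (hiso : ∀ x ∈ S, ∀ y ∈ S, ω x y = 0) :
    finrank ℂ S ≤ n := by
  have hrefl : LinearMap.IsRefl ω := halt.isRefl
  have hndeg : LinearMap.BilinForm.Nondegenerate (ω : LinearMap.BilinForm ℂ U) :=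
    hrefl.nondegenerate_iff_separatingLeft.mpr hnd
  have h1 := LinearMap.BilinForm.finrank_orthogonal hndeg S
  have h2 : S ≤ LinearMap.BilinForm.orthogonal ω S := by
    intro x hx
    rw [LinearMap.BilinForm.mem_orthogonal_iff]
    intro y hy
    exact hiso y hy x hx
  have h3 : finrank ℂ S ≤ finrank ℂ (LinearMap.BilinForm.orthogonal ω S) :=
    Submodule.finrank_mono h2
  have h4 : finrank ℂ S ≤ finrank ℂ U := Submodule.finrank_le S
  omega

end LinAlg

section Build

open Module

variable {U : Type*} [AddCommGroup U] [Module ℂ U] [FiniteDimensional ℂ U]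

lemma exists_symp_family
    {n : ℕ} (hU : finrank ℂ U = 2 * n)
    (ω : U →ₗ[ℂ] U →ₗ[ℂ] ℂ) (halt : ω.IsAlt)
    (hnd : ∀ u : U, (∀ v : U, ω u v = 0) → u = 0)
    (W : Submodule ℂ U) {l : ℕ} (hd : n + l ≤ finrank ℂ W) :
    ∀ k : ℕ, k ≤ l → ∃ e f : Fin k → U,
      (∀ i, e i ∈ W) ∧ (∀ i, f i ∈ W) ∧
      (∀ i j, ω (e i) (e j) = 0) ∧ (∀ i j, ω (f i) (f j) = 0) ∧
      (∀ i j, ω (e i) (f j) = if i = j then 1 else 0) := by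
  have hskew : ∀ x y : U, ω x y = -ω y x := fun x y => (halt.neg y x).symm
  intro k
  induction k with
  | zero =>
    exact fun _ => ⟨Fin.elim0, Fin.elim0, fun i => i.elim0, fun i => i.elim0,
      fun i => i.elim0, fun i => i.elim0, fun i => i.elim0⟩
  | succ k ih =>
    intro hkl
    obtain ⟨e, f, heW, hfW, hee, hff, hef⟩ := ih (by omega)
    set S : Submodule ℂ U :=
      W ⊓ ⨅ i : Fin k, (LinearMap.ker (ω (e i)) ⊓ LinearMap.ker (ω (f i))) with hSdef
    have hSmem : ∀ x : U, x ∈ S ↔ x ∈ W ∧ ∀ i, ω (e i) x = 0 ∧ ω (f i) x = 0 := by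
      intro x
      simp [hSdef, Submodule.mem_inf, Submodule.mem_iInf, LinearMap.mem_ker]
    have hdim : finrank ℂ W ≤ finrank ℂ S + (k + k) := by
      have h1 := finrank_le_inf_iInf W (fun i => ω (e i))
      have h2 := finrank_le_inf_iInf (W ⊓ ⨅ i : Fin k, LinearMap.ker (ω (e i)))
        (fun i => ω (f i))
      have hSeq : S = (W ⊓ ⨅ i : Fin k, LinearMap.ker (ω (e i)))
          ⊓ ⨅ i : Fin k, LinearMap.ker (ω (f i)) := by
        rw [hSdef, iInf_inf_eq, inf_assoc]
      rw [hSeq]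
      omega
    -- find a non-orthogonal pair inside S
    have hex : ∃ u, u ∈ S ∧ ∃ v, v ∈ S ∧ ω u v ≠ 0 := by
      by_contra hcon
      push_neg at hcon
      have hiso : ∀ u ∈ S, ∀ v ∈ S, ω u v = 0 := fun u hu v hv => hcon u hu v hv
      have hli : LinearIndependent ℂ e := by
        rw [Fintype.linearIndependent_iff]
        intro g hg j
        have h0 : ω (∑ i, g i • e i) (f j) = 0 := by rw [hg]; simp
        simp only [map_sum, map_smul, LinearMap.sum_apply, LinearMap.smul_apply, hef,
          smul_eq_mul, mul_ite, mul_one, mul_zero, Finset.sum_ite_eq', Finset.mem_univ,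
          if_true] at h0
        exact h0
      set spanE : Submodule ℂ U := Submodule.span ℂ (Set.range e) with hspanEdef
      have hspanE_rank : finrank ℂ spanE = k := by
        rw [hspanEdef, finrank_span_eq_card hli, Fintype.card_fin]
      have hfe : ∀ i j, ω (f j) (e i) = -(if i = j then (1 : ℂ) else 0) := by
        intro i j
        rw [hskew (f j) (e i), hef]
      have hdisj : S ⊓ spanE = ⊥ := by
        rw [eq_bot_iff]
        rintro x hx
        rw [Submodule.mem_inf] at hx
        obtain ⟨hxS, hxE⟩ := hx
        rw [hspanEdef, Submodule.mem_span_range_iff_exists_fun] at hxE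
        obtain ⟨c, hc⟩ := hxE
        have hcz : ∀ j, c j = 0 := by
          intro j
          have h0 : ω (f j) x = 0 := ((hSmem x).mp hxS).2 j |>.2
          rw [← hc] at h0
          simp only [map_sum, map_smul, smul_eq_mul, hfe, mul_neg, mul_ite, mul_one,
            mul_zero, Finset.sum_neg_distrib, Finset.sum_ite_eq', Finset.mem_univ,
            if_true, neg_eq_zero] at h0
          exact h0
        rw [← hc]
        simp [hcz]
      -- T = S ⊔ spanE is isotropic
      have hisoT : ∀ x ∈ S ⊔ spanE, ∀ y ∈ S ⊔ spanE, ω x y = 0 := by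
        intro x hx y hy
        rw [Submodule.mem_sup] at hx hy
        obtain ⟨s, hs, q, hq, rfl⟩ := hx
        obtain ⟨s', hs', q', hq', rfl⟩ := hy
        rw [hspanEdef, Submodule.mem_span_range_iff_exists_fun] at hq hq'
        obtain ⟨c, rfl⟩ := hq
        obtain ⟨d, rfl⟩ := hq'
        have h2 : ∀ i, ω (e i) s' = 0 := fun i => (((hSmem s').mp hs').2 i).1
        have h3 : ∀ i, ω s (e i) = 0 := by
          intro i
          rw [hskew, (((hSmem s).mp hs).2 i).1, neg_zero]
        simp only [map_add, map_sum, map_smul, LinearMap.add_apply, LinearMap.sum_apply,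
          LinearMap.smul_apply, smul_eq_mul, hiso s hs s' hs', h2, h3, hee, mul_zero,
          Finset.sum_const_zero, add_zero, zero_add]
      have h5 := Submodule.finrank_sup_add_finrank_inf_eq S spanE
      rw [hdisj, finrank_bot] at h5
      have h6 := isotropic_le hU ω halt hnd (S ⊔ spanE) hisoT
      omega
    obtain ⟨u, hu, v, hv, hc⟩ := hex
    have huW := ((hSmem u).mp hu).1
    have hvW := ((hSmem v).mp hv).1
    have hue : ∀ i, ω (e i) u = 0 := fun i => (((hSmem u).mp hu).2 i).1
    have huf : ∀ i, ω (f i) u = 0 := fun i => (((hSmem u).mp hu).2 i).2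
    have hve : ∀ i, ω (e i) v = 0 := fun i => (((hSmem v).mp hv).2 i).1
    have hvf : ∀ i, ω (f i) v = 0 := fun i => (((hSmem v).mp hv).2 i).2
    set c : ℂ := ω u v with hcdef
    refine ⟨Fin.snoc e u, Fin.snoc f (c⁻¹ • v), ?_, ?_, ?_, ?_, ?_⟩
    · intro i
      refine Fin.lastCases ?_ (fun j => ?_) i
      · rw [Fin.snoc_last]; exact huW
      · rw [Fin.snoc_castSucc]; exact heW j
    · intro i
      refine Fin.lastCases ?_ (fun j => ?_) i
      · rw [Fin.snoc_last]; exact Submodule.smul_mem _ _ hvW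
      · rw [Fin.snoc_castSucc]; exact hfW j
    · intro i j
      refine Fin.lastCases ?_ (fun i' => ?_) i
      · refine Fin.lastCases ?_ (fun j' => ?_) j
        · rw [Fin.snoc_last]; exact halt u
        · rw [Fin.snoc_last, Fin.snoc_castSucc, hskew u (e j'), hue j', neg_zero]
      · refine Fin.lastCases ?_ (fun j' => ?_) j
        · rw [Fin.snoc_castSucc, Fin.snoc_last]; exact hue i'
        · rw [Fin.snoc_castSucc, Fin.snoc_castSucc]; exact hee i' j'
    · intro i j
      refine Fin.lastCases ?_ (fun i' => ?_) i
      · refine Fin.lastCases ?_ (fun j' => ?_) j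
        · rw [Fin.snoc_last]
          simp only [map_smul, LinearMap.smul_apply, smul_eq_mul, halt v, mul_zero]
        · rw [Fin.snoc_last, Fin.snoc_castSucc]
          simp only [map_smul, LinearMap.smul_apply, smul_eq_mul]
          rw [hskew v (f j'), hvf j', neg_zero, mul_zero]
      · refine Fin.lastCases ?_ (fun j' => ?_) j
        · rw [Fin.snoc_castSucc, Fin.snoc_last]
          rw [map_smul, smul_eq_mul, hvf i', mul_zero]
        · rw [Fin.snoc_castSucc, Fin.snoc_castSucc]; exact hff i' j'
    · intro i j
      refine Fin.lastCases ?_ (fun i' => ?_) i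
      · refine Fin.lastCases ?_ (fun j' => ?_) j
        · simp only [Fin.snoc_last, if_pos rfl]
          rw [map_smul, smul_eq_mul, ← hcdef, inv_mul_cancel₀ hc]
          simp
        · rw [Fin.snoc_last, Fin.snoc_castSucc, if_neg (Fin.castSucc_lt_last j').ne']
          rw [hskew u (f j'), huf j', neg_zero]
      · refine Fin.lastCases ?_ (fun j' => ?_) j
        · rw [Fin.snoc_castSucc, Fin.snoc_last, if_neg (Fin.castSucc_lt_last i').ne]
          rw [map_smul, smul_eq_mul, hve i', mul_zero]
        · rw [Fin.snoc_castSucc, Fin.snoc_castSucc, hef i' j']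
          simp [Fin.castSucc_inj]

end Build

/-- `U` a complex vector space of dimension `2n` with a nondegenerate
alternating bilinear form `ω`, `l ≥ 1`.  If `W ⊆ U` is a linear subspace on which
`ω^{∧l}` vanishes identically, then `dim W ≤ n + l − 1`. -/
theorem finrank_le_of_wedgePow_vanishes_symplectic
    (U : Type*) [AddCommGroup U] [Module ℂ U] [FiniteDimensional ℂ U]
    (n : ℕ) (hU : Module.finrank ℂ U = 2 * n)
    (ω : U →ₗ[ℂ] U →ₗ[ℂ] ℂ) (halt : ω.IsAlt)
    (hnd : ∀ u : U, (∀ v : U, ω u v = 0) → u = 0)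
    (l : ℕ) (hl : 1 ≤ l)
    (W : Submodule ℂ U)
    (hvan : ∀ w : Fin (2 * l) → U, (∀ i, w i ∈ W) →
      wedgePow (fun x y => ω x y) l w = 0) :
    Module.finrank ℂ W ≤ n + l - 1 := by
  by_contra hcon
  push_neg at hcon
  have hd : n + l ≤ Module.finrank ℂ W := by omega
  obtain ⟨e, f, heW, hfW, hee, hff, hef⟩ :=
    exists_symp_family hU ω halt hnd W hd l le_rfl
  set w : Fin (2 * l) → U := fun x =>
    if x.1 % 2 = 0 then e ⟨x.1 / 2, by have := x.2; omega⟩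
    else f ⟨x.1 / 2, by have := x.2; omega⟩ with hwdef
  have hmem : ∀ i, w i ∈ W := by
    intro i
    simp only [hwdef]
    split_ifs
    · exact heW _
    · exact hfW _
  have hskew : ∀ x y : U, ω x y = -ω y x := fun x y => (halt.neg y x).symm
  have hJ : ∀ a b : Fin (2 * l), ω (w a) (w b) =
      (if a.1 % 2 = 0 ∧ b.1 = a.1 + 1 then (1 : ℂ)
       else if b.1 % 2 = 0 ∧ a.1 = b.1 + 1 then -1 else 0) := by
    intro a b
    simp only [hwdef]
    by_cases ha : a.1 % 2 = 0 <;> by_cases hb : b.1 % 2 = 0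
    · rw [if_pos ha, if_pos hb, hee, if_neg (by omega), if_neg (by omega)]
    · rw [if_pos ha, if_neg hb, hef]
      simp only [Fin.mk.injEq]
      split_ifs <;> first | rfl | (exfalso; omega)
    · rw [if_neg ha, if_pos hb, hskew, hef]
      simp only [Fin.mk.injEq]
      split_ifs <;> first | (exfalso; omega) | norm_num
    · rw [if_neg ha, if_neg hb, hff, if_neg (by omega), if_neg (by omega)]
  exact Key.key_ne_zero l (fun x y => ω x y) w hJ (hvan w hmem)
end

section
/- Let V be a complex vector space of finite dimension g ≥ 1, let r ≥ 1 be an integer, and let W ⊆ V^r be a linear subspace with dim W = g. Suppose that for every one-dimensional subspace L ⊆ V, the restriction to W of the quotient map π_L : V^r → (V/L)^r (the r-fold product of the canonical projection V → V/L) is not injective. Then there exists a vector (m_1,…,m_r) ∈ ℂ^r such that W = { (m_1 v, m_2 v, …, m_r v) : v ∈ V }. -/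
open scoped BigOperators

/-- Let `V` be a `g`-dimensional complex vector space (`g ≥ 1`), `r ≥ 1`, and
`W ⊆ V^r` a `g`-dimensional linear subspace.  If for every one-dimensional subspace `L ⊆ V`
the restriction to `W` of the `r`-fold product projection `π_L : V^r → (V/L)^r` is not
injective, then `W = V_M = {(m_1 v, …, m_r v) : v ∈ V}` for some `(m_1,…,m_r) ∈ ℂ^r`. -/
theorem subspace_eq_diagonal_of_no_injective_projection
    (V : Type*) [AddCommGroup V] [Module ℂ V] [FiniteDimensional ℂ V]
    (g r : ℕ) (hg : 1 ≤ g) (hr : 1 ≤ r)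
    (hV : Module.finrank ℂ V = g)
    (W : Submodule ℂ (Fin r → V)) (hW : Module.finrank ℂ W = g)
    (hproj : ∀ L : Submodule ℂ V, Module.finrank ℂ L = 1 →
      ¬ Function.Injective (fun w : W =>
        (LinearMap.pi fun i : Fin r => L.mkQ.comp (LinearMap.proj i)) (w : Fin r → V))) :
    ∃ m : Fin r → ℂ,
      W = LinearMap.range (LinearMap.pi fun j : Fin r => m j • (LinearMap.id : V →ₗ[ℂ] V)) := by
  classical
  -- Step 1: for every nonzero `v`, `W` contains a nonzero element of the form `(m i • v)`.
  have key : ∀ v : V, v ≠ 0 → ∃ m : Fin r → ℂ, m ≠ 0 ∧ (fun i => m i • v) ∈ W := by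
    intro v hv
    have hL : Module.finrank ℂ (Submodule.span ℂ ({v} : Set V)) = 1 :=
      finrank_span_singleton hv
    have h := hproj _ hL
    rw [Function.not_injective_iff] at h
    obtain ⟨a, b, hab, hne⟩ := h
    have hwW : (a : Fin r → V) - (b : Fin r → V) ∈ W := W.sub_mem a.2 b.2
    have hwi : ∀ i, ((a : Fin r → V) - (b : Fin r → V)) i ∈ Submodule.span ℂ ({v} : Set V) := by
      intro i
      have h1 := congrFun hab i
      simp only [LinearMap.pi_apply, LinearMap.comp_apply, LinearMap.proj_apply,
        Submodule.mkQ_apply] at h1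
      have h2 : (Submodule.span ℂ ({v} : Set V)).mkQ (((a : Fin r → V) - b) i) = 0 := by
        simp only [Pi.sub_apply, map_sub, Submodule.mkQ_apply, h1, sub_self]
      rwa [Submodule.mkQ_apply, Submodule.Quotient.mk_eq_zero] at h2
    choose c hc using fun i => Submodule.mem_span_singleton.1 (hwi i)
    have hcw : (fun i => c i • v) = (a : Fin r → V) - (b : Fin r → V) := by
      funext i; exact hc i
    refine ⟨c, ?_, hcw ▸ hwW⟩
    intro h0
    apply hne
    apply Subtype.ext
    have h3 : (a : Fin r → V) - (b : Fin r → V) = 0 := by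
      rw [← hcw, h0]; funext i; simp
    exact sub_eq_zero.1 h3
  -- Step 2: pick a basis and the corresponding elements of `W`.
  let b : Module.Basis (Fin g) ℂ V := (Module.finBasis ℂ V).reindex (finCongr hV)
  choose mm hmm hmmW using fun k : Fin g => key (b k) (b.ne_zero k)
  set e : Fin g → (Fin r → V) := fun k i => mm k i • b k with he
  have hbind := Fintype.linearIndependent_iff.1 b.linearIndependent
  have hind : LinearIndependent ℂ e := by
    rw [Fintype.linearIndependent_iff]
    intro c hc k
    obtain ⟨i, hi⟩ : ∃ i, mm k i ≠ 0 := by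
      by_contra h; push_neg at h; exact hmm k (funext h)
    have h1 := congrFun hc i
    simp only [he, Finset.sum_apply, Pi.smul_apply, smul_smul, Pi.zero_apply] at h1
    have h2 := hbind (fun l => c l * mm l i) h1 k
    exact (mul_eq_zero.1 h2).resolve_right hi
  -- `W` is spanned by the `e k`
  have hspan : W = Submodule.span ℂ (Set.range e) := by
    have hle : Submodule.span ℂ (Set.range e) ≤ W := by
      rw [Submodule.span_le]; rintro x ⟨k, rfl⟩; exact hmmW k
    have hfr : Module.finrank ℂ (Submodule.span ℂ (Set.range e)) = g := by
      rw [finrank_span_eq_card hind, Fintype.card_fin]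
    exact (Submodule.eq_of_le_of_finrank_le hle (by rw [hW, hfr])).symm
  have k0 : Fin g := ⟨0, hg⟩
  -- all `mm k` are proportional to `mm k0`
  have hprop : ∀ k, ∃ lam : ℂ, ∀ i, mm k i = lam * mm k0 i := by
    intro k
    by_cases hk : k = k0
    · exact ⟨1, by intro i; rw [hk, one_mul]⟩
    · have hv : b k0 + b k ≠ 0 := by
        intro h0
        have h4 := hbind (fun l => (if l = k0 then (1:ℂ) else 0) + if l = k then 1 else 0)
          (by
            simp only [add_smul, ite_smul, one_smul, zero_smul, Finset.sum_add_distrib,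
              Finset.sum_ite_eq', Finset.mem_univ, if_true]
            exact h0) k0
        simp [hk, Ne.symm hk] at h4
      obtain ⟨m, hm0, hmW⟩ := key _ hv
      rw [hspan, Submodule.mem_span_range_iff_exists_fun] at hmW
      obtain ⟨c, hc⟩ := hmW
      have hco : ∀ i, m i = c k0 * mm k0 i ∧ m i = c k * mm k i := by
        intro i
        have h1 := congrFun hc i
        simp only [he, Finset.sum_apply, Pi.smul_apply, smul_smul, smul_add] at h1
        -- h1 : ∑ l, (c l * mm l i) • b l = m i • b k0 + m i • b k
        have hz : ∑ l, ((c l * mm l i) - (if l = k0 then m i else 0)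
            - (if l = k then m i else 0)) • b l = 0 := by
          simp only [sub_smul, ite_smul, zero_smul, Finset.sum_sub_distrib,
            Finset.sum_ite_eq', Finset.mem_univ, if_true]
          rw [h1]; abel
        have hd := hbind _ hz
        constructor
        · have h5 := hd k0
          simp only [if_pos rfl, if_neg (Ne.symm hk), sub_zero, sub_eq_zero] at h5
          exact h5.symm
        · have h5 := hd k
          simp only [if_pos rfl, if_neg hk, sub_zero, sub_eq_zero] at h5
          exact h5.symm
      have hck : c k ≠ 0 := by
        intro h0
        apply hm0
        funext i
        rw [(hco i).2, h0, zero_mul, Pi.zero_apply]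
      refine ⟨(c k)⁻¹ * c k0, fun i => ?_⟩
      have h6 : c k * mm k i = c k0 * mm k0 i := by rw [← (hco i).2, (hco i).1]
      field_simp
      rw [mul_comm (mm k i) (c k), h6]
  -- Conclusion
  refine ⟨mm k0, ?_⟩
  set T : (V →ₗ[ℂ] (Fin r → V)) :=
    LinearMap.pi fun j : Fin r => mm k0 j • (LinearMap.id : V →ₗ[ℂ] V) with hT
  have hinj : Function.Injective T := by
    obtain ⟨j, hj⟩ : ∃ j, mm k0 j ≠ 0 := by
      by_contra h; push_neg at h; exact hmm k0 (funext h)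
    rw [injective_iff_map_eq_zero]
    intro v hv
    have h7 := congrFun hv j
    simp only [hT, LinearMap.pi_apply, LinearMap.smul_apply, LinearMap.id_apply,
      Pi.zero_apply] at h7
    exact (smul_eq_zero.1 h7).resolve_left hj
  have hle : W ≤ LinearMap.range T := by
    rw [hspan, Submodule.span_le]
    rintro x ⟨k, rfl⟩
    obtain ⟨lam, hlam⟩ := hprop k
    refine ⟨lam • b k, ?_⟩
    funext i
    simp only [hT, LinearMap.pi_apply, LinearMap.smul_apply, LinearMap.id_apply, he]
    rw [smul_smul, hlam i, mul_comm]
  exact Submodule.eq_of_le_of_finrank_le hle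
    (le_of_eq (by rw [LinearMap.finrank_range_of_inj hinj, hV, hW]))
end
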